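/- If M is a finite module over a finite cyclic group G, then the Herbrand quotient h(M) = 1, i.e. |H_T^0(G, M)| = |H_T^{-1}(G, M)|. -/

import Mathlib

namespace Tate

variable (G : Type) [Group G] (M : Type) [AddCommGroup M] [DistribMulAction G M]

/-- Inhomogeneous (co)chain groups: functions `G^m → M`. -/
abbrev C (m : ℕ) : Type := (Fin m → G) → M

/-- The standard inhomogeneous coboundary map. -/
def dPlus (m : ℕ) : C G M m →+ C G M (m + 1) :=
  AddMonoidHom.mk' (fun f g =>
    g 0 • f (fun i => g i.succ) +
      ∑ j : Fin (m + 1), ((-1 : ℤ) ^ (j.val + 1)) • f (Fin.contractNth j (· * ·) g))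
    (fun a b => by
      funext g
      simp only [Pi.add_apply, smul_add, Finset.sum_add_distrib]
      abel)

variable [Finite G]

/-- The norm map on (co)chains. -/
noncomputable def normMap (m : ℕ) : C G M m →+ C G M m :=
  letI : Fintype G := Fintype.ofFinite G
  AddMonoidHom.mk' (fun f x => ∑ g : G, g • f x)
    (fun a b => by
      funext x
      simp only [Pi.add_apply, smul_add, Finset.sum_add_distrib])

/-- The standard inhomogeneous boundary map on chains of a finite group
(chains of a finite group are plain functions `G^m → M`). -/
noncomputable def dMinus (m : ℕ) : C G M (m + 1) →+ C G M m :=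
  letI : Fintype G := Fintype.ofFinite G
  letI := Classical.decEq G
  AddMonoidHom.mk' (fun f h =>
    (∑ g : G, g⁻¹ • f (Fin.cons g h)) +
      (∑ j : Fin m, ((-1 : ℤ) ^ (j.val + 1)) •
        ∑ g : G, f (Fin.insertNth j.castSucc g (Function.update h j (g⁻¹ * h j)))) +
      ((-1 : ℤ) ^ (m + 1)) • ∑ g : G, f (Fin.snoc h g))
    (fun a b => by
      funext x
      simp only [Pi.add_apply, smul_add, Finset.sum_add_distrib]
      abel)

/-- The size of the tuples at degree `n` of the complete standard complex. -/
def dim : ℤ → ℕ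
  | .ofNat m => m
  | .negSucc m => m

/-- Cocycles of the complete standard complex. -/
noncomputable def cocycles : ∀ n : ℤ, AddSubgroup (C G M (dim n))
  | .ofNat m => (dPlus G M m).ker
  | .negSucc 0 => (normMap G M 0).ker
  | .negSucc (m + 1) => (dMinus G M m).ker

/-- Coboundaries of the complete standard complex. -/
noncomputable def boundaries : ∀ n : ℤ, AddSubgroup (C G M (dim n))
  | .ofNat 0 => (normMap G M 0).range
  | .ofNat (m + 1) => (dPlus G M m).range
  | .negSucc m => (dMinus G M m).range

/-- Tate cohomology of a finite group `G` with coefficients in the `G`-module `M`: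
`H_T^n(G, M)` for all `n : ℤ`. -/
noncomputable def tate (n : ℤ) : Type :=
  cocycles G M n ⧸ (boundaries G M n).addSubgroupOf (cocycles G M n)

noncomputable instance (n : ℤ) : AddCommGroup (tate G M n) :=
  inferInstanceAs (AddCommGroup (_ ⧸ _))

end Tate

/-- The trivial action of a group on an abelian group. -/
def Tate.trivialAction (G M : Type) [Group G] [AddCommGroup M] : DistribMulAction G M where
  smul _ m := m
  one_smul _ := rfl
  mul_smul _ _ _ := rfl
  smul_zero _ := rfl
  smul_add _ _ _ := rfl

namespace Tate

variable (G : Type) [Group G] [Finite G] (M : Type) [AddCommGroup M] [DistribMulAction G M]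

/-- The Herbrand quotient `h(M) = |H_T^0(G,M)| / |H_T^1(G,M)|`. -/
noncomputable def herbrand : ℚ :=
  (Nat.card (tate G M 0) : ℚ) / (Nat.card (tate G M 1) : ℚ)

/-- The Herbrand quotient is defined when both `H_T^0(G,M)` and `H_T^1(G,M)` are finite. -/
def HerbrandDefined : Prop :=
  Finite (tate G M 0) ∧ Finite (tate G M 1)

end Tate
set_option linter.unusedSectionVars false
set_option linter.unusedVariables false
namespace HQ
open Tate AddSubgroup

variable {G : Type} [Group G] [Finite G] {M : Type} [AddCommGroup M] [DistribMulAction G M]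

/-- The norm as a map `M →+ M`. -/
noncomputable def Nm (G : Type) [Group G] [Finite G] (M : Type) [AddCommGroup M]
    [DistribMulAction G M] : M →+ M :=
  letI : Fintype G := Fintype.ofFinite G
  AddMonoidHom.mk' (fun m => ∑ g : G, g • m)
    (fun a b => by simp only [smul_add, Finset.sum_add_distrib])

/-- `σ • m - m` as a map `M →+ M`. -/
def Dm (σ : G) (M : Type) [AddCommGroup M] [DistribMulAction G M] : M →+ M :=
  AddMonoidHom.mk' (fun m => σ • m - m) (fun a b => by simp only [smul_add]; abel)

@[simp] lemma Dm_apply (σ : G) (m : M) : Dm σ M m = σ • m - m := rfl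

/-- Evaluation at the empty tuple as an equivalence `C G M 0 ≃+ M`. -/
def eps0 : Tate.C G M 0 ≃+ M where
  toFun f := f Fin.elim0
  invFun m := fun _ => m
  left_inv f := funext fun x => congrArg f (Subsingleton.elim _ _)
  right_inv m := rfl
  map_add' a b := rfl

lemma dPlus_zero_apply (f : Tate.C G M 0) (g : Fin 1 → G) :
    dPlus G M 0 f g = g 0 • f Fin.elim0 - f Fin.elim0 := by
  show g 0 • f _ + ∑ j : Fin 1, ((-1 : ℤ) ^ (j.val + 1)) • f _ = _
  rw [Fin.sum_univ_one]
  have h1 : (fun i : Fin 0 => g i.succ) = Fin.elim0 := Subsingleton.elim _ _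
  have h2 : Fin.contractNth (0 : Fin 1) (· * ·) g = Fin.elim0 := Subsingleton.elim _ _
  rw [h1, h2]
  simp [sub_eq_add_neg]

variable {σ : G}

lemma exists_pow (hσ : ∀ x : G, x ∈ Subgroup.zpowers σ) (g : G) : ∃ k : ℕ, σ ^ k = g := by
  rcases (mem_powers_iff_mem_zpowers).2 (hσ g) with ⟨k, hk⟩
  exact ⟨k, hk⟩

lemma fixed_iff (hσ : ∀ x : G, x ∈ Subgroup.zpowers σ) (m : M) :
    (∀ g : G, g • m = m) ↔ σ • m = m := by
  refine ⟨fun h => h σ, fun h g => ?_⟩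
  obtain ⟨k, rfl⟩ := exists_pow hσ g
  induction k with
  | zero => simp
  | succ k ih => rw [pow_succ', mul_smul, ih, h]

lemma sub_mem_rangeD (g : G) (m : M) (hσ : ∀ x : G, x ∈ Subgroup.zpowers σ) :
    g • m - m ∈ (Dm σ M).range := by
  obtain ⟨k, rfl⟩ := exists_pow hσ g
  induction k with
  | zero => exact ⟨0, by simp⟩
  | succ k ih =>
      have : σ ^ (k+1) • m - m = (σ • (σ ^ k • m) - σ ^ k • m) + (σ ^ k • m - m) := by
        rw [pow_succ', mul_smul]; abel
      rw [this]
      exact add_mem ⟨σ ^ k • m, rfl⟩ ih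

lemma norm_eq (hσ : ∀ x : G, x ∈ Subgroup.zpowers σ) (m : M) :
    Nm G M m = ∑ i ∈ Finset.range (orderOf σ), σ ^ i • m := by
  letI : Fintype G := Fintype.ofFinite G
  show ∑ g : G, g • m = _
  refine (Finset.sum_bij (fun (i : ℕ) (_ : i ∈ Finset.range (orderOf σ)) => σ ^ i)
    (fun _ _ => Finset.mem_univ _) ?_ ?_ ?_).symm
  · intro a ha b hb hab
    exact pow_injOn_Iio_orderOf (Finset.mem_range.1 ha) (Finset.mem_range.1 hb) hab
  · intro g _
    obtain ⟨k, rfl⟩ := exists_pow hσ g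
    exact ⟨k % orderOf σ, Finset.mem_range.2 (Nat.mod_lt _ (orderOf_pos σ)), pow_mod_orderOf σ k⟩
  · intro a ha
    rfl

lemma map_cocycles_zero (hσ : ∀ x : G, x ∈ Subgroup.zpowers σ) :
    ((dPlus G M 0).ker).map (eps0 (G := G) (M := M)).toAddMonoidHom = (Dm σ M).ker := by
  ext m
  rw [AddSubgroup.mem_map_equiv]
  show (fun _ => m) ∈ (dPlus G M 0).ker ↔ _
  rw [AddMonoidHom.mem_ker, AddMonoidHom.mem_ker]
  constructor
  · intro h
    have := congrFun h (fun _ => σ)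
    rw [dPlus_zero_apply] at this
    simpa [sub_eq_zero] using this
  · intro h
    funext v
    rw [dPlus_zero_apply]
    show v 0 • m - m = 0
    rw [(fixed_iff hσ m).2 (by simpa [sub_eq_zero] using h) (v 0), sub_self]

lemma map_boundaries_zero :
    ((normMap G M 0).range).map (eps0 (G := G) (M := M)).toAddMonoidHom = (Nm G M).range := by
  letI : Fintype G := Fintype.ofFinite G
  ext m
  rw [AddSubgroup.mem_map_equiv]
  show (fun _ => m) ∈ (normMap G M 0).range ↔ _
  constructor
  · rintro ⟨f, hf⟩
    exact ⟨f Fin.elim0, congrFun hf Fin.elim0⟩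
  · rintro ⟨x, hx⟩
    exact ⟨fun _ => x, funext fun v => hx⟩

lemma map_cocycles_neg_one :
    ((normMap G M 0).ker).map (eps0 (G := G) (M := M)).toAddMonoidHom = (Nm G M).ker := by
  letI : Fintype G := Fintype.ofFinite G
  ext m
  rw [AddSubgroup.mem_map_equiv]
  show (fun _ => m) ∈ (normMap G M 0).ker ↔ _
  rw [AddMonoidHom.mem_ker, AddMonoidHom.mem_ker]
  constructor
  · intro h
    exact congrFun h Fin.elim0
  · intro h
    funext v
    exact h
lemma map_boundaries_neg_one (hσ : ∀ x : G, x ∈ Subgroup.zpowers σ) :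
    ((dMinus G M 0).range).map (eps0 (G := G) (M := M)).toAddMonoidHom = (Dm σ M).range := by
  letI : Fintype G := Fintype.ofFinite G
  letI := Classical.decEq G
  have key : ∀ f : Tate.C G M 1, dMinus G M 0 f Fin.elim0 =
      ∑ g : G, (g⁻¹ • f (Fin.cons g Fin.elim0) - f (Fin.cons g Fin.elim0)) := by
    intro f
    show (∑ g : G, g⁻¹ • f (Fin.cons g Fin.elim0)) + (∑ j : Fin 0, _) +
        ((-1 : ℤ) ^ (0 + 1)) • ∑ g : G, f (Fin.snoc Fin.elim0 g) = _
    have hsn : ∀ g : G, (Fin.snoc Fin.elim0 g : Fin 1 → G) = Fin.cons g Fin.elim0 := by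
      intro g; funext i
      rw [show i = 0 from Fin.ext (Nat.lt_one_iff.mp i.isLt)]
      rfl
    simp only [Finset.univ_eq_empty, Finset.sum_empty, add_zero, pow_one, neg_one_zsmul, hsn,
      Finset.sum_sub_distrib]
    abel
  ext m
  rw [AddSubgroup.mem_map_equiv]
  show (fun _ => m) ∈ (dMinus G M 0).range ↔ _
  constructor
  · rintro ⟨f, hf⟩
    have hm : m = dMinus G M 0 f Fin.elim0 := (congrFun hf Fin.elim0).symm
    rw [hm, key]
    exact AddSubgroup.sum_mem _ fun g _ => sub_mem_rangeD g⁻¹ _ hσ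
  · rintro ⟨x, hx⟩
    refine ⟨fun v => if v 0 = σ⁻¹ then x else 0, ?_⟩
    funext h
    rw [(Subsingleton.elim h Fin.elim0 : h = Fin.elim0)]
    show dMinus G M 0 _ Fin.elim0 = m
    rw [key, Finset.sum_eq_single_of_mem σ⁻¹ (Finset.mem_univ _)]
    · show (σ⁻¹)⁻¹ • (if (Fin.cons σ⁻¹ Fin.elim0 : Fin 1 → G) 0 = σ⁻¹ then x else 0) -
        (if (Fin.cons σ⁻¹ Fin.elim0 : Fin 1 → G) 0 = σ⁻¹ then x else 0) = m
      rw [Fin.cons_zero, if_pos rfl, inv_inv]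
      exact hx
    · intro b _ hb
      show b⁻¹ • (if (Fin.cons b Fin.elim0 : Fin 1 → G) 0 = σ⁻¹ then x else 0) -
        (if (Fin.cons b Fin.elim0 : Fin 1 → G) 0 = σ⁻¹ then x else 0) = 0
      rw [Fin.cons_zero, if_neg hb]
      simp
lemma dPlus_one_apply (f : Tate.C G M 1) (v : Fin 2 → G) :
    dPlus G M 1 f v =
      v 0 • f (fun _ => v 1) - f (fun _ => v 0 * v 1) + f (fun _ => v 0) := by
  show v 0 • f (fun i => v i.succ) +
      ∑ j : Fin 2, ((-1 : ℤ) ^ (j.val + 1)) • f (Fin.contractNth j (· * ·) v) = _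
  have e1 : (fun i : Fin 1 => v i.succ) = fun _ => v 1 := by
    funext i
    rw [show i = 0 from Fin.ext (Nat.lt_one_iff.mp i.isLt)]
    rfl
  have e2 : Fin.contractNth (0 : Fin 2) (· * ·) v = fun _ : Fin 1 => v 0 * v 1 := by
    funext i
    rw [show i = 0 from Fin.ext (Nat.lt_one_iff.mp i.isLt)]
    exact Fin.contractNth_apply_of_eq _ _ _ _ rfl
  have e3 : Fin.contractNth (1 : Fin 2) (· * ·) v = fun _ : Fin 1 => v 0 := by
    funext i
    rw [show i = 0 from Fin.ext (Nat.lt_one_iff.mp i.isLt)]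
    exact Fin.contractNth_apply_of_lt _ _ _ _ (by norm_num)
  rw [Fin.sum_univ_two, e1, e2, e3]
  norm_num
  abel
lemma tuple1 (v : Fin 1 → G) : v = fun _ => v 0 :=
  funext fun i => congrArg v (Fin.ext (Nat.lt_one_iff.mp i.isLt))

lemma cocycle_rel {f : Tate.C G M 1} (hf : f ∈ (dPlus G M 1).ker) (g h : G) :
    f (fun _ => g * h) = g • f (fun _ => h) + f (fun _ => g) := by
  have h1 := congrFun (AddMonoidHom.mem_ker.mp hf) ![g, h]
  rw [dPlus_one_apply] at h1
  simp only [Matrix.cons_val_zero, Matrix.cons_val_one, Matrix.head_cons, Pi.zero_apply] at h1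
  rw [sub_add_eq_add_sub, sub_eq_zero] at h1
  exact h1.symm

lemma cocycle_one {f : Tate.C G M 1} (hf : f ∈ (dPlus G M 1).ker) :
    f (fun _ => (1 : G)) = 0 := by
  have := cocycle_rel hf 1 1
  rw [one_mul, one_smul] at this
  exact left_eq_add.mp this

lemma cocycle_pow {σ : G} {f : Tate.C G M 1} (hf : f ∈ (dPlus G M 1).ker) (k : ℕ) :
    f (fun _ => σ ^ k) = ∑ i ∈ Finset.range k, σ ^ i • f (fun _ => σ) := by
  induction k with
  | zero => rw [pow_zero, Finset.range_zero, Finset.sum_empty]; exact cocycle_one hf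
  | succ k ih =>
      rw [pow_succ', cocycle_rel hf σ (σ ^ k), ih, Finset.sum_range_succ', pow_zero, one_smul,
        Finset.smul_sum]
      congr 1
      exact Finset.sum_congr rfl fun i _ => by rw [pow_succ', mul_smul]

lemma cocycle_eq_zero (hσ : ∀ x : G, x ∈ Subgroup.zpowers σ) {f : Tate.C G M 1}
    (hf : f ∈ (dPlus G M 1).ker) (h0 : f (fun _ => σ) = 0) : f = 0 := by
  funext v
  rw [tuple1 v]
  obtain ⟨k, hk⟩ := exists_pow hσ (v 0)
  rw [← hk, cocycle_pow hf]
  simp [h0]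
lemma norm_F (hσ : ∀ x : G, x ∈ Subgroup.zpowers σ) {f : Tate.C G M 1}
    (hf : f ∈ (dPlus G M 1).ker) : Nm G M (f (fun _ => σ)) = 0 := by
  rw [norm_eq hσ, ← cocycle_pow hf, pow_orderOf_eq_one]
  exact cocycle_one hf

lemma exists_cocycle (hσ : ∀ x : G, x ∈ Subgroup.zpowers σ) {m : M} (hm : Nm G M m = 0) :
    ∃ f ∈ (dPlus G M 1).ker, f (fun _ => σ) = m := by
  classical
  have hnpos : 0 < orderOf σ := orderOf_pos σ
  set S : ℕ → M := fun k => ∑ i ∈ Finset.range k, σ ^ i • m with hS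
  have S_succ : ∀ k, S (k + 1) = S k + σ ^ k • m := fun k => Finset.sum_range_succ _ _
  have S_add : ∀ a b : ℕ, S (a + b) = S a + σ ^ a • S b := by
    intro a b
    induction b with
    | zero => simp [hS]
    | succ b ih =>
        rw [show a + (b + 1) = (a + b) + 1 by omega, S_succ, ih, S_succ, smul_add, pow_add,
          mul_smul]
        abel
  have S_n : S (orderOf σ) = 0 := by
    simp only [hS]
    rw [← norm_eq hσ m, hm]
  have S_mod : ∀ k, S k = S (k % orderOf σ) := by
    intro k
    induction k using Nat.strong_induction_on with
    | _ k ih =>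
        rcases lt_or_ge k (orderOf σ) with h | h
        · rw [Nat.mod_eq_of_lt h]
        · have hk : k = orderOf σ + (k - orderOf σ) := by omega
          rw [hk, S_add, S_n, pow_orderOf_eq_one, one_smul, zero_add, Nat.add_mod_left,
            ih (k - orderOf σ) (by omega)]
  have S_congr : ∀ {k l : ℕ}, σ ^ k = σ ^ l → S k = S l := by
    intro k l hkl
    rw [S_mod k, S_mod l, pow_inj_mod.mp hkl]
  choose idx hidx using exists_pow hσ
  refine ⟨fun v => S (idx (v 0)), ?_, ?_⟩
  · rw [AddMonoidHom.mem_ker]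
    funext v
    rw [dPlus_one_apply]
    show v 0 • S (idx (v 1)) - S (idx (v 0 * v 1)) + S (idx (v 0)) = 0
    have e1 : S (idx (v 0 * v 1)) = S (idx (v 0) + idx (v 1)) :=
      S_congr (by rw [pow_add, hidx, hidx, hidx])
    have e2 : v 0 • S (idx (v 1)) = σ ^ idx (v 0) • S (idx (v 1)) := by rw [hidx]
    rw [e1, e2, S_add]
    abel
  · show S (idx σ) = m
    have h1 : S (idx σ) = S 1 := S_congr (by rw [hidx, pow_one])
    rw [h1, hS]
    simp

/-- Evaluation of a 1-cochain at the generator. -/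
def ev1 (σ : G) (M : Type) [AddCommGroup M] [DistribMulAction G M] : Tate.C G M 1 →+ M :=
  AddMonoidHom.mk' (fun f => f (fun _ => σ)) (fun a b => rfl)

lemma map_cocycles_one (hσ : ∀ x : G, x ∈ Subgroup.zpowers σ) :
    ((dPlus G M 1).ker).map (ev1 σ M) = (Nm G M).ker := by
  ext m
  simp only [AddSubgroup.mem_map, AddMonoidHom.mem_ker]
  constructor
  · rintro ⟨f, hf, rfl⟩
    exact norm_F hσ hf
  · intro hm
    obtain ⟨f, hf, hfσ⟩ := exists_cocycle hσ hm
    exact ⟨f, hf, hfσ⟩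

lemma map_boundaries_one : ((dPlus G M 0).range).map (ev1 σ M) = (Dm σ M).range := by
  ext m
  simp only [AddSubgroup.mem_map, AddMonoidHom.mem_range]
  constructor
  · rintro ⟨f, ⟨c, rfl⟩, rfl⟩
    refine ⟨c Fin.elim0, ?_⟩
    show σ • c Fin.elim0 - c Fin.elim0 = ev1 σ M (dPlus G M 0 c)
    show _ = dPlus G M 0 c (fun _ => σ)
    rw [dPlus_zero_apply]
  · rintro ⟨x, rfl⟩
    refine ⟨dPlus G M 0 (fun _ => x), ⟨_, rfl⟩, ?_⟩
    show dPlus G M 0 (fun _ => x) (fun _ => σ) = σ • x - x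
    rw [dPlus_zero_apply]

lemma range_dPlus0_le : (dPlus G M 0).range ≤ (dPlus G M 1).ker := by
  rintro _ ⟨c, rfl⟩
  rw [AddMonoidHom.mem_ker]
  funext v
  rw [dPlus_one_apply, dPlus_zero_apply, dPlus_zero_apply, dPlus_zero_apply]
  show v 0 • (v 1 • c Fin.elim0 - c Fin.elim0) - ((v 0 * v 1) • c Fin.elim0 - c Fin.elim0) +
      (v 0 • c Fin.elim0 - c Fin.elim0) = 0
  rw [smul_sub, mul_smul]
  abel

lemma Nm_smul (g : G) (m : M) : Nm G M (g • m) = Nm G M m := by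
  letI : Fintype G := Fintype.ofFinite G
  show ∑ h : G, h • g • m = ∑ h : G, h • m
  refine Fintype.sum_equiv (Equiv.mulRight g) _ _ fun h => ?_
  rw [← mul_smul]
  rfl

lemma range_norm_le : (normMap G M 0).range ≤ (dPlus G M 0).ker := by
  letI : Fintype G := Fintype.ofFinite G
  rintro _ ⟨c, rfl⟩
  rw [AddMonoidHom.mem_ker]
  funext v
  rw [dPlus_zero_apply]
  show v 0 • ∑ g : G, g • c Fin.elim0 - ∑ g : G, g • c Fin.elim0 = 0
  rw [sub_eq_zero, Finset.smul_sum]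
  refine Fintype.sum_equiv (Equiv.mulLeft (v 0)) _ _ fun h => ?_
  rw [← mul_smul]
  rfl

lemma dMinus_zero_apply (f : Tate.C G M 1) (x : Fin 0 → G) :
    dMinus G M 0 f x = @Finset.sum G M _ (@Finset.univ G (Fintype.ofFinite G))
      (fun g => g⁻¹ • f (Fin.cons g Fin.elim0) - f (Fin.cons g Fin.elim0)) := by
  letI : Fintype G := Fintype.ofFinite G
  rw [(Subsingleton.elim x Fin.elim0 : x = Fin.elim0)]
  show (∑ g : G, g⁻¹ • f (Fin.cons g Fin.elim0)) + (∑ j : Fin 0, ((-1 : ℤ) ^ (j.val + 1)) •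
      ∑ g : G, f (Fin.insertNth j.castSucc g (Function.update Fin.elim0 j (g⁻¹ * Fin.elim0 j)))) +
      ((-1 : ℤ) ^ (0 + 1)) • ∑ g : G, f (Fin.snoc Fin.elim0 g) = _
  have hsn : ∀ g : G, (Fin.snoc Fin.elim0 g : Fin 1 → G) = Fin.cons g Fin.elim0 := by
    intro g; funext i
    rw [show i = 0 from Fin.ext (Nat.lt_one_iff.mp i.isLt)]
    rfl
  simp only [Finset.univ_eq_empty, Finset.sum_empty, add_zero, pow_one, neg_one_zsmul, hsn,
    Finset.sum_sub_distrib]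
  abel

lemma range_dMinus_le : (dMinus G M 0).range ≤ (normMap G M 0).ker := by
  letI : Fintype G := Fintype.ofFinite G
  rintro _ ⟨f, rfl⟩
  rw [AddMonoidHom.mem_ker]
  funext x
  show Nm G M (dMinus G M 0 f x) = 0
  rw [dMinus_zero_apply]
  rw [map_sum]
  refine Finset.sum_eq_zero fun g _ => ?_
  rw [map_sub, Nm_smul, sub_self]
lemma card_map_eq {X : Type} [AddCommGroup X] (K : AddSubgroup X) (φ : X →+ M)
    (h : ∀ f ∈ K, φ f = 0 → f = 0) : Nat.card K = Nat.card (K.map φ) := by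
  have hinj : Function.Injective (φ.comp K.subtype) := by
    rw [injective_iff_map_eq_zero]
    intro a ha
    have : (a : X) = 0 := h a a.2 ha
    exact Subtype.ext this
  have e1 : K ≃+ (φ.comp K.subtype).range := AddMonoidHom.ofInjective hinj
  have e2 : (φ.comp K.subtype).range = K.map φ := by
    rw [AddMonoidHom.range_comp, AddSubgroup.range_subtype]
  rw [Nat.card_congr e1.toEquiv, e2]

lemma card_quot_mul {X : Type} [AddCommGroup X] [Finite X] (A B : AddSubgroup X) (h : B ≤ A) :
    Nat.card (A ⧸ B.addSubgroupOf A) * Nat.card B = Nat.card A := by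
  rw [← Nat.card_congr (AddSubgroup.addSubgroupOfEquivOfLe h).toEquiv]
  exact (AddSubgroup.card_eq_card_quotient_mul_card_addSubgroup _).symm

lemma card_ker_mul_card_range {X : Type} [AddCommGroup X] [Finite X] (φ : X →+ X) :
    Nat.card φ.ker * Nat.card φ.range = Nat.card X := by
  rw [← Nat.card_congr (QuotientAddGroup.quotientKerEquivRange φ).toEquiv,
    AddSubgroup.card_eq_card_quotient_mul_card_addSubgroup φ.ker, Nat.mul_comm]

end HQ


/-- If `M` is a finite module over a finite cyclic group `G`, then the Herbrand quotient
`h(M) = 1`, i.e. `|H_T^0(G, M)| = |H_T^{-1}(G, M)|`. -/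
theorem herbrand_quotient_eq_one_of_finite (G : Type) [Group G] [Finite G] (hG : IsCyclic G)
    (M : Type) [AddCommGroup M] [DistribMulAction G M] (hM : Finite M) :
    Nat.card (Tate.tate G M 0) = Nat.card (Tate.tate G M (-1)) ∧
      Tate.herbrand G M = 1 := by
  haveI := hM
  obtain ⟨σ, hσ⟩ := hG.exists_generator
  haveI : Finite (Tate.C G M 0) := Pi.finite
  haveI : Finite (Tate.C G M 1) := Pi.finite
  -- cards of the four basic subgroups of M
  set a := Nat.card ((HQ.Dm σ M).ker)
  set b := Nat.card ((HQ.Dm σ M).range)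
  set c := Nat.card ((HQ.Nm G M).ker)
  set d := Nat.card ((HQ.Nm G M).range)
  have hbpos : 0 < b := Nat.card_pos
  have hdpos : 0 < d := Nat.card_pos
  -- degree 0
  have hA0 : Nat.card ((Tate.dPlus G M 0).ker) = a := by
    rw [HQ.card_map_eq ((Tate.dPlus G M 0).ker) (HQ.eps0 (G := G) (M := M)).toAddMonoidHom
      (fun f _ hf => (HQ.eps0 (G := G) (M := M)).injective (by simpa using hf)),
      HQ.map_cocycles_zero hσ]
  have hB0 : Nat.card ((Tate.normMap G M 0).range) = d := by
    rw [HQ.card_map_eq ((Tate.normMap G M 0).range) (HQ.eps0 (G := G) (M := M)).toAddMonoidHom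
      (fun f _ hf => (HQ.eps0 (G := G) (M := M)).injective (by simpa using hf)),
      HQ.map_boundaries_zero]
  have h0 : Nat.card (Tate.tate G M 0) * d = a := by
    rw [show Nat.card (Tate.tate G M 0) =
      Nat.card (((Tate.dPlus G M 0).ker) ⧸
        ((Tate.normMap G M 0).range).addSubgroupOf ((Tate.dPlus G M 0).ker)) from rfl,
      ← hA0, ← hB0]
    exact HQ.card_quot_mul _ _ HQ.range_norm_le
  -- degree -1
  have hA1 : Nat.card ((Tate.normMap G M 0).ker) = c := by
    rw [HQ.card_map_eq ((Tate.normMap G M 0).ker) (HQ.eps0 (G := G) (M := M)).toAddMonoidHom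
      (fun f _ hf => (HQ.eps0 (G := G) (M := M)).injective (by simpa using hf)),
      HQ.map_cocycles_neg_one]
  have hB1 : Nat.card ((Tate.dMinus G M 0).range) = b := by
    rw [HQ.card_map_eq ((Tate.dMinus G M 0).range) (HQ.eps0 (G := G) (M := M)).toAddMonoidHom
      (fun f _ hf => (HQ.eps0 (G := G) (M := M)).injective (by simpa using hf)),
      HQ.map_boundaries_neg_one hσ]
  have h1 : Nat.card (Tate.tate G M (-1)) * b = c := by
    rw [show Nat.card (Tate.tate G M (-1)) =
      Nat.card (((Tate.normMap G M 0).ker) ⧸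
        ((Tate.dMinus G M 0).range).addSubgroupOf ((Tate.normMap G M 0).ker)) from rfl,
      ← hA1, ← hB1]
    exact HQ.card_quot_mul _ _ HQ.range_dMinus_le
  -- degree 1
  have hA2 : Nat.card ((Tate.dPlus G M 1).ker) = c := by
    rw [HQ.card_map_eq ((Tate.dPlus G M 1).ker) (HQ.ev1 σ M)
      (fun f hf h0 => HQ.cocycle_eq_zero hσ hf h0),
      HQ.map_cocycles_one hσ]
  have hB2 : Nat.card ((Tate.dPlus G M 0).range) = b := by
    rw [HQ.card_map_eq ((Tate.dPlus G M 0).range) (HQ.ev1 σ M)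
      (fun f hf h0 => HQ.cocycle_eq_zero hσ (HQ.range_dPlus0_le hf) h0),
      HQ.map_boundaries_one]
  have h2 : Nat.card (Tate.tate G M 1) * b = c := by
    rw [show Nat.card (Tate.tate G M 1) =
      Nat.card (((Tate.dPlus G M 1).ker) ⧸
        ((Tate.dPlus G M 0).range).addSubgroupOf ((Tate.dPlus G M 1).ker)) from rfl,
      ← hA2, ← hB2]
    exact HQ.card_quot_mul _ _ HQ.range_dPlus0_le
  -- Euler characteristic count
  have hDm : a * b = Nat.card M := HQ.card_ker_mul_card_range (HQ.Dm σ M)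
  have hNm : c * d = Nat.card M := HQ.card_ker_mul_card_range (HQ.Nm G M)
  -- t0 = t(-1)
  have key : Nat.card (Tate.tate G M 0) = Nat.card (Tate.tate G M (-1)) := by
    have : Nat.card (Tate.tate G M 0) * (d * b) = Nat.card (Tate.tate G M (-1)) * (d * b) := by
      calc Nat.card (Tate.tate G M 0) * (d * b) = (Nat.card (Tate.tate G M 0) * d) * b := by ring
        _ = a * b := by rw [h0]
        _ = c * d := by rw [hDm, hNm]
        _ = (Nat.card (Tate.tate G M (-1)) * b) * d := by rw [h1]
        _ = Nat.card (Tate.tate G M (-1)) * (d * b) := by ring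
    exact Nat.eq_of_mul_eq_mul_right (Nat.mul_pos hdpos hbpos) this
  have key2 : Nat.card (Tate.tate G M 1) = Nat.card (Tate.tate G M (-1)) :=
    Nat.eq_of_mul_eq_mul_right hbpos (by rw [h1, h2])
  refine ⟨key, ?_⟩
  have hpos : 0 < Nat.card (Tate.tate G M 1) := by
    have hcpos : 0 < c := Nat.card_pos
    rcases Nat.eq_zero_or_pos (Nat.card (Tate.tate G M 1)) with h | h
    · rw [h, Nat.zero_mul] at h2
      omega
    · exact h
  show (Nat.card (Tate.tate G M 0) : ℚ) / (Nat.card (Tate.tate G M 1) : ℚ) = 1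
  rw [key, ← key2, div_self]
  exact_mod_cast hpos.ne'
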